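/- arXiv:2212.14636 — 4 statements merged into one kernel-verified Lean document; each statement's English description precedes it below -/
import Mathlib

section
/- Let X ⊆ [n] and suppose X is c-bad for a family F, i.e. sup_{I∈F} μ_I(X ∩ I) < c, where for each I ∈ F the weights μ_I(i) ≥ 0 on i ∈ I satisfy Σ_{i∈I} μ_I(i) = 1. Then for every I ∈ F there exists a threshold ε ∈ [0,1) such that, setting Ĩ = {i ∈ I : μ_I(i) > ε} and j = |Ĩ|, one has |Ĩ ∩ X| < c·|Ĩ| (with Ĩ consisting of the j elements of I with largest weights). -/
open Finset MeasureTheory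

theorem stmt2 (n : ℕ) (F : Set (Finset (Fin n))) (μ : Finset (Fin n) → Fin n → ℝ)
    (hnn : ∀ I ∈ F, ∀ i ∈ I, 0 ≤ μ I i) (hsum : ∀ I ∈ F, ∑ i ∈ I, μ I i = 1)
    (c : ℝ) (hc : 0 < c) (X : Finset (Fin n))
    (hbad : ∀ I ∈ F, ∑ i ∈ X ∩ I, μ I i < c) :
    ∀ I ∈ F, ∃ ε : ℝ, 0 ≤ ε ∧ ε < 1 ∧
      (((I.filter fun i => ε < μ I i) ∩ X).card : ℝ) <
        c * ((I.filter fun i => ε < μ I i).card : ℝ) := by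
  intro I hI
  by_contra h
  push_neg at h
  set ν := μ I with hν
  have hle : ∀ i ∈ I, ν i ≤ 1 := by
    intro i hi
    rw [← hsum I hI]
    exact Finset.single_le_sum (fun j hj => hnn I hI j hj) hi
  have hint : ∀ i ∈ I, IntegrableOn
      (fun ε => Set.indicator (Set.Ioo 0 (ν i)) (fun _ => (1:ℝ)) ε) (Set.Ioo (0:ℝ) 1) := by
    intro i hi
    apply Integrable.integrableOn
    rw [integrable_indicator_iff measurableSet_Ioo]
    exact integrableOn_const (by simp [Real.volume_Ioo]) (by simp)
  have hval : ∀ i ∈ I,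
      (∫ ε in Set.Ioo (0:ℝ) 1, Set.indicator (Set.Ioo 0 (ν i)) (fun _ => (1:ℝ)) ε) = ν i := by
    intro i hi
    rw [MeasureTheory.setIntegral_indicator measurableSet_Ioo]
    have heq : Set.Ioo (0:ℝ) 1 ∩ Set.Ioo 0 (ν i) = Set.Ioo 0 (ν i) :=
      Set.inter_eq_right.2 (Set.Ioo_subset_Ioo le_rfl (hle i hi))
    rw [heq]
    simp [Real.volume_Ioo, ENNReal.toReal_ofReal (hnn I hI i hi)]
    exact hnn I hI i hi
  set G := fun ε => ∑ i ∈ I ∩ X, Set.indicator (Set.Ioo 0 (ν i)) (fun _ => (1:ℝ)) ε with hG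
  set Fm := fun ε => ∑ i ∈ I, Set.indicator (Set.Ioo 0 (ν i)) (fun _ => (1:ℝ)) ε with hFm
  have hGint : IntegrableOn G (Set.Ioo (0:ℝ) 1) :=
    integrable_finset_sum _ (fun i hi => hint i (Finset.mem_of_mem_inter_left hi))
  have hFint : IntegrableOn Fm (Set.Ioo (0:ℝ) 1) :=
    integrable_finset_sum _ (fun i hi => hint i hi)
  have hGval : (∫ ε in Set.Ioo (0:ℝ) 1, G ε) = ∑ i ∈ I ∩ X, ν i := by
    rw [hG, integral_finset_sum _ (fun i hi => hint i (Finset.mem_of_mem_inter_left hi))]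
    exact Finset.sum_congr rfl fun i hi => hval i (Finset.mem_of_mem_inter_left hi)
  have hFval : (∫ ε in Set.Ioo (0:ℝ) 1, Fm ε) = 1 := by
    rw [hFm, integral_finset_sum _ (fun i hi => hint i hi),
      Finset.sum_congr rfl fun i hi => hval i hi]
    exact hsum I hI
  have hcount : ∀ ε ∈ Set.Ioo (0:ℝ) 1, ∀ S : Finset (Fin n),
      (∑ i ∈ S, Set.indicator (Set.Ioo 0 (ν i)) (fun _ => (1:ℝ)) ε)
        = ((S.filter fun i => ε < ν i).card : ℝ) := by
    intro ε hε S
    rw [Finset.card_filter]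
    push_cast
    apply Finset.sum_congr rfl
    intro i _
    by_cases h' : ε < ν i
    · simp [Set.indicator, Set.mem_Ioo, hε.1, h']
    · simp [Set.indicator, Set.mem_Ioo, h']
  have hpt : ∀ ε ∈ Set.Ioo (0:ℝ) 1, c * Fm ε ≤ G ε := by
    intro ε hε
    have h1 := h ε hε.1.le hε.2
    have hFeq : Fm ε = ((I.filter fun i => ε < ν i).card : ℝ) := hcount ε hε I
    have hGeq : G ε = (((I.filter fun i => ε < ν i) ∩ X).card : ℝ) := by
      simp only [hG]
      rw [hcount ε hε (I ∩ X), Finset.filter_inter]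
    rw [hFeq, hGeq]
    exact h1
  have hmono : (∫ ε in Set.Ioo (0:ℝ) 1, c * Fm ε) ≤ ∫ ε in Set.Ioo (0:ℝ) 1, G ε :=
    setIntegral_mono_on (hFint.const_mul c) hGint measurableSet_Ioo hpt
  rw [integral_const_mul, hFval, hGval, mul_one] at hmono
  have hb := hbad I hI
  rw [Finset.inter_comm] at hb
  linarith
end

section
/- Let c ∈ (0,1), I a finite set with nonnegative weights μ(i), Σ_{i∈I} μ(i) = 1, and X a set with Σ_{i∈I∩X} μ(i) < c. Consider the continuous function φ(ε) = Σ_{i∈I∩X} min(μ(i), ε) − c·Σ_{i∈I} min(μ(i), ε) on [0,1]. Then φ(0) = 0, φ(1) < 0, and there exists a largest ε* ∈ [0,1) with φ(ε*) ≥ 0 such that φ(ε) < 0 for all ε > ε*; moreover for this ε*, the strict inequality Σ_{i∈I∩X} 1_{μ(i) > ε*} < c·Σ_{i∈I} 1_{μ(i) > ε*} holds. -/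
open Finset

theorem stmt3 {ι : Type*} [DecidableEq ι] (I : Finset ι) (μ : ι → ℝ)
    (hnn : ∀ i ∈ I, 0 ≤ μ i) (hsum : ∑ i ∈ I, μ i = 1)
    (X : Finset ι) (c : ℝ) (hc0 : 0 < c) (hc1 : c < 1)
    (hX : ∑ i ∈ I ∩ X, μ i < c)
    (φ : ℝ → ℝ)
    (hφ : ∀ ε, φ ε = ∑ i ∈ I ∩ X, min (μ i) ε - c * ∑ i ∈ I, min (μ i) ε) :
    φ 0 = 0 ∧ φ 1 < 0 ∧
      ∃ εstar : ℝ, 0 ≤ εstar ∧ εstar < 1 ∧ 0 ≤ φ εstar ∧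
        (∀ ε, εstar < ε → φ ε < 0) ∧
        ((((I ∩ X).filter fun i => εstar < μ i).card : ℝ) <
          c * ((I.filter fun i => εstar < μ i).card : ℝ)) := by
  have hsub : I ∩ X ⊆ I := inter_subset_left
  have hnnX : ∀ i ∈ I ∩ X, 0 ≤ μ i := fun i hi => hnn i (hsub hi)
  have hμ1 : ∀ i ∈ I, μ i ≤ 1 := by
    intro i hi
    calc μ i ≤ ∑ j ∈ I, μ j := Finset.single_le_sum hnn hi
    _ = 1 := hsum
  have hφ0 : φ 0 = 0 := by
    rw [hφ, Finset.sum_congr rfl (fun i hi => min_eq_right (hnnX i hi)),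
        Finset.sum_congr rfl (fun i hi => min_eq_right (hnn i hi))]
    simp
  -- for ε ≥ 1 the value equals φ 1
  have hge1 : ∀ ε : ℝ, 1 ≤ ε → φ ε = ∑ i ∈ I ∩ X, μ i - c := by
    intro ε hε
    rw [hφ,
      Finset.sum_congr rfl (fun i hi => min_eq_left ((hμ1 i (hsub hi)).trans hε)),
      Finset.sum_congr rfl (fun i hi => min_eq_left ((hμ1 i hi).trans hε)), hsum]
    ring
  have hφ1 : φ 1 < 0 := by
    rw [hge1 1 le_rfl]; linarith
  refine ⟨hφ0, hφ1, ?_⟩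
  have hφeq : φ = fun ε => ∑ i ∈ I ∩ X, min (μ i) ε - c * ∑ i ∈ I, min (μ i) ε :=
    funext hφ
  have hcont : Continuous φ := by
    rw [hφeq]
    exact (continuous_finset_sum _ fun i _ => continuous_const.min continuous_id).sub
      (continuous_const.mul
        (continuous_finset_sum _ fun i _ => continuous_const.min continuous_id))
  set S : Set ℝ := Set.Icc (0:ℝ) 1 ∩ {ε | 0 ≤ φ ε} with hSdef
  have hSne : S.Nonempty := ⟨0, ⟨le_refl 0, zero_le_one⟩, hφ0.ge⟩
  have hSbdd : BddAbove S := ⟨1, fun x hx => hx.1.2⟩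
  have hSclosed : IsClosed S :=
    isClosed_Icc.inter (isClosed_le continuous_const hcont)
  set εstar : ℝ := sSup S with hεdef
  have hmem : εstar ∈ S := hSclosed.csSup_mem hSne hSbdd
  obtain ⟨⟨hε0, hε1le⟩, hφεm⟩ := hmem
  have hφε : 0 ≤ φ εstar := hφεm
  have hε1 : εstar < 1 := by
    rcases lt_or_eq_of_le hε1le with h | h
    · exact h
    · exfalso; rw [h] at hφε; linarith
  have hneg : ∀ ε, εstar < ε → φ ε < 0 := by
    intro ε hε
    by_contra h
    push_neg at h
    rcases le_or_gt ε 1 with h1 | h1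
    · have hεS : ε ∈ S := ⟨⟨le_trans hε0 hε.le, h1⟩, h⟩
      exact absurd (le_csSup hSbdd hεS) (not_le.mpr hε)
    · rw [hge1 ε h1.le] at h; linarith
  refine ⟨εstar, hε0, hε1, hφε, hneg, ?_⟩
  -- the set of large atoms is nonempty
  have hTne : (I.filter fun i => εstar < μ i).Nonempty := by
    by_contra hne
    rw [Finset.not_nonempty_iff_eq_empty, Finset.filter_eq_empty_iff] at hne
    have hle : ∀ i ∈ I, μ i ≤ εstar := fun i hi => not_lt.mp (hne hi)
    have : φ εstar = ∑ i ∈ I ∩ X, μ i - c := by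
      rw [hφ, Finset.sum_congr rfl (fun i hi => min_eq_left (hle i (hsub hi))),
        Finset.sum_congr rfl (fun i hi => min_eq_left (hle i hi)), hsum]
      ring
    rw [this] at hφε; linarith
  set m : ℝ := (I.filter fun i => εstar < μ i).inf' hTne μ with hmdef
  have hm_gt : εstar < m := by
    rw [hmdef, Finset.lt_inf'_iff]
    intro i hi
    exact (Finset.mem_filter.mp hi).2
  have hm_le : ∀ i ∈ I, εstar < μ i → m ≤ μ i := by
    intro i hi h
    exact Finset.inf'_le μ (Finset.mem_filter.mpr ⟨hi, h⟩)
  have key : ∀ s : Finset ι, s ⊆ I →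
      ∑ i ∈ s, min (μ i) m = ∑ i ∈ s, min (μ i) εstar
        + ((s.filter fun i => εstar < μ i).card : ℝ) * (m - εstar) := by
    intro s hs
    have h1 : ∑ i ∈ s, (min (μ i) m - min (μ i) εstar)
        = ∑ i ∈ s, (if εstar < μ i then m - εstar else 0) := by
      apply Finset.sum_congr rfl
      intro i hi
      by_cases hc' : εstar < μ i
      · rw [if_pos hc', min_eq_right (hm_le i (hs hi) hc'), min_eq_right hc'.le]
      · push_neg at hc'
        rw [if_neg (not_lt.mpr hc'), min_eq_left (hc'.trans hm_gt.le),
          min_eq_left hc', sub_self]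
    rw [Finset.sum_sub_distrib] at h1
    rw [← Finset.sum_filter, Finset.sum_const, nsmul_eq_mul] at h1
    linarith
  have hφm : φ m < 0 := hneg m hm_gt
  have e1 := key (I ∩ X) hsub
  have e2 := key I (subset_refl I)
  rw [hφ m, e1, e2] at hφm
  rw [hφ εstar] at hφε
  set A : ℝ := (((I ∩ X).filter fun i => εstar < μ i).card : ℝ)
  set B : ℝ := ((I.filter fun i => εstar < μ i).card : ℝ)
  by_contra hcon
  push_neg at hcon
  have hd : 0 < m - εstar := by linarith
  nlinarith [mul_nonneg (sub_nonneg.mpr hcon) hd.le]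
end

section
/- Let T be a finite set of nonnegative sequences indexed by [n], let Y be uniformly distributed on the m-element subsets of [n], and Y' uniformly distributed on the km-element subsets of [n] (k a positive integer, km ≤ n). Then E sup_{t∈T} Σ_{i∈Y'} t_i ≤ k · E sup_{t∈T} Σ_{i∈Y} t_i. -/
open Finset

lemma count_mem_powersetCard {α : Type*} [DecidableEq α] (A : Finset α) (m : ℕ) (hm : 1 ≤ m)
    {i : α} (hi : i ∈ A) :
    ((A.powersetCard m).filter (fun B => i ∈ B)).card = (A.card - 1).choose (m - 1) := by
  rw [← Finset.card_erase_of_mem hi, ← Finset.card_powersetCard]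
  apply Finset.card_bij (fun B _ => B.erase i)
  · intro B hB
    simp only [mem_filter, mem_powersetCard] at hB
    exact mem_powersetCard.2 ⟨Finset.erase_subset_erase _ hB.1.1,
      by rw [Finset.card_erase_of_mem hB.2, hB.1.2]⟩
  · intro B hB B' hB' h
    simp only [mem_filter, mem_powersetCard] at hB hB'
    rw [← Finset.insert_erase hB.2, ← Finset.insert_erase hB'.2, h]
  · intro C hC
    rw [mem_powersetCard] at hC
    have hiC : i ∉ C := fun h => (Finset.mem_erase.1 (hC.1 h)).1 rfl
    refine ⟨insert i C, ?_, by rw [Finset.erase_insert hiC]⟩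
    simp only [mem_filter, mem_powersetCard]
    refine ⟨⟨?_, ?_⟩, Finset.mem_insert_self _ _⟩
    · exact Finset.insert_subset hi (hC.1.trans (Finset.erase_subset _ _))
    · rw [Finset.card_insert_of_notMem hiC, hC.2]; omega

lemma count_supset_powersetCard {α : Type*} [Fintype α] [DecidableEq α] (K : ℕ) (B : Finset α)
    (hBK : B.card ≤ K) :
    ((Finset.powersetCard K (Finset.univ : Finset α)).filter (fun A => B ⊆ A)).card
      = (Fintype.card α - B.card).choose (K - B.card) := by
  have hcard : (Finset.univ \ B).card = Fintype.card α - B.card := by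
    rw [Finset.card_sdiff_of_subset (Finset.subset_univ B), Finset.card_univ]
  rw [← hcard, ← Finset.card_powersetCard]
  apply Finset.card_bij (fun A _ => A \ B)
  · intro A hA
    simp only [mem_filter, mem_powersetCard] at hA
    exact mem_powersetCard.2 ⟨Finset.sdiff_subset_sdiff (Finset.subset_univ A) Finset.Subset.rfl,
      by rw [Finset.card_sdiff_of_subset hA.2, hA.1.2]⟩
  · intro A hA A' hA' h
    simp only [mem_filter, mem_powersetCard] at hA hA'
    rw [← Finset.sdiff_union_of_subset hA.2, ← Finset.sdiff_union_of_subset hA'.2, h]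
  · intro C hC
    rw [mem_powersetCard] at hC
    have hdisj : Disjoint C B := by
      refine Finset.disjoint_left.2 fun a haC haB => ?_
      exact (Finset.mem_sdiff.1 (hC.1 haC)).2 haB
    refine ⟨C ∪ B, ?_, by rw [Finset.union_sdiff_cancel_right hdisj]⟩
    simp only [mem_filter, mem_powersetCard]
    refine ⟨⟨Finset.subset_univ _, ?_⟩, Finset.subset_union_right⟩
    rw [Finset.card_union_of_disjoint hdisj, hC.2]; omega

theorem stmt11 (n m k : ℕ) (hk : 0 < k) (hkm : k * m ≤ n)
    (T : Finset (Fin n → ℝ)) (hT : T.Nonempty) (hpos : ∀ t ∈ T, ∀ i, 0 ≤ t i) :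
    (1 / (n.choose (k * m) : ℝ)) *
        ∑ Y ∈ Finset.powersetCard (k * m) (Finset.univ : Finset (Fin n)),
          T.sup' hT (fun t => ∑ i ∈ Y, t i)
      ≤ (k : ℝ) *
        ((1 / (n.choose m : ℝ)) *
          ∑ Y ∈ Finset.powersetCard m (Finset.univ : Finset (Fin n)),
            T.sup' hT (fun t => ∑ i ∈ Y, t i)) := by
  rcases Nat.eq_zero_or_pos m with hm0 | hm
  · subst hm0
    simp [Finset.powersetCard_zero]
  -- notation
  set S' : ℝ := ∑ Y ∈ Finset.powersetCard (k * m) (Finset.univ : Finset (Fin n)),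
      T.sup' hT (fun t => ∑ i ∈ Y, t i) with hS'
  set S : ℝ := ∑ Y ∈ Finset.powersetCard m (Finset.univ : Finset (Fin n)),
      T.sup' hT (fun t => ∑ i ∈ Y, t i) with hS
  have hmkm : m ≤ k * m := Nat.le_mul_of_pos_left m hk
  have hmn : m ≤ n := hmkm.trans hkm
  set c1 : ℕ := (k * m - 1).choose (m - 1) with hc1
  set c2 : ℕ := (n - m).choose (k * m - m) with hc2
  -- pointwise inequality for each km-set A
  have key : ∀ A ∈ Finset.powersetCard (k * m) (Finset.univ : Finset (Fin n)),
      (c1 : ℝ) * T.sup' hT (fun t => ∑ i ∈ A, t i)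
        ≤ ∑ B ∈ A.powersetCard m, T.sup' hT (fun t => ∑ i ∈ B, t i) := by
    intro A hA
    have hAcard : A.card = k * m := (mem_powersetCard.1 hA).2
    obtain ⟨t₀, ht₀, ht₀eq⟩ := Finset.exists_mem_eq_sup' hT (fun t => ∑ i ∈ A, t i)
    rw [ht₀eq]
    have hident : ∑ B ∈ A.powersetCard m, ∑ i ∈ B, t₀ i = (c1 : ℝ) * ∑ i ∈ A, t₀ i := by
      have hsum : ∀ B ∈ A.powersetCard m, ∑ i ∈ B, t₀ i
          = ∑ i ∈ A, (if i ∈ B then t₀ i else 0) := by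
        intro B hB
        rw [Finset.sum_ite_mem, Finset.inter_comm,
          Finset.inter_eq_left.2 (mem_powersetCard.1 hB).1]
      rw [Finset.sum_congr rfl hsum, Finset.sum_comm, Finset.mul_sum]
      refine Finset.sum_congr rfl fun i hi => ?_
      rw [← Finset.sum_filter, Finset.sum_const,
        count_mem_powersetCard A m hm hi, hAcard, nsmul_eq_mul]
    calc (c1 : ℝ) * ∑ i ∈ A, t₀ i = ∑ B ∈ A.powersetCard m, ∑ i ∈ B, t₀ i := hident.symm
      _ ≤ ∑ B ∈ A.powersetCard m, T.sup' hT (fun t => ∑ i ∈ B, t i) :=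
        Finset.sum_le_sum fun B _ => Finset.le_sup' _ ht₀
  -- double counting
  have hdouble : ∑ A ∈ Finset.powersetCard (k * m) (Finset.univ : Finset (Fin n)),
      ∑ B ∈ A.powersetCard m, T.sup' hT (fun t => ∑ i ∈ B, t i) = (c2 : ℝ) * S := by
    have hrw : ∀ A : Finset (Fin n), A.powersetCard m
        = (Finset.powersetCard m (Finset.univ : Finset (Fin n))).filter (fun B => B ⊆ A) := by
      intro A
      ext B
      simp only [mem_powersetCard, mem_filter, subset_univ, true_and]
      tauto
    rw [Finset.sum_congr rfl fun A _ => by rw [hrw A, Finset.sum_filter]]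
    rw [Finset.sum_comm, hS, Finset.mul_sum]
    refine Finset.sum_congr rfl fun B hB => ?_
    rw [← Finset.sum_filter, Finset.sum_const, nsmul_eq_mul]
    congr 2
    have hBcard : B.card = m := (mem_powersetCard.1 hB).2
    rw [count_supset_powersetCard (k * m) B (hBcard ▸ hmkm), hBcard, Fintype.card_fin]
  have hmain : (c1 : ℝ) * S' ≤ (c2 : ℝ) * S := by
    rw [hS', Finset.mul_sum]
    exact le_of_le_of_eq (Finset.sum_le_sum key) hdouble
  -- binomial identities
  have hid1 : n.choose (k * m) * (k * m).choose m = n.choose m * c2 :=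
    Nat.choose_mul hmkm
  have hid2 : (k * m).choose m = k * c1 := by
    have h := Nat.add_one_mul_choose_eq (k * m - 1) (m - 1)
    have h1 : k * m - 1 + 1 = k * m := by omega
    have h2 : m - 1 + 1 = m := by omega
    rw [h1, h2] at h
    -- h : k * m * c1 = (k*m).choose m * m
    have : k * c1 * m = (k * m).choose m * m := by
      rw [← h, hc1]; ring
    exact (Nat.eq_of_mul_eq_mul_right hm this).symm
  have hc1pos : 0 < c1 := Nat.choose_pos (by omega)
  have hN1pos : (0 : ℝ) < n.choose (k * m) := by
    exact_mod_cast Nat.choose_pos hkm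
  have hN2pos : (0 : ℝ) < n.choose m := by
    exact_mod_cast Nat.choose_pos hmn
  -- combine
  have hfinal : (n.choose m : ℝ) * S' ≤ (k : ℝ) * (n.choose (k * m) : ℝ) * S := by
    have hc1R : (0 : ℝ) < c1 := by exact_mod_cast hc1pos
    rw [← mul_le_mul_iff_right₀ hc1R]
    calc (c1 : ℝ) * ((n.choose m : ℝ) * S') = (n.choose m : ℝ) * ((c1 : ℝ) * S') := by ring
      _ ≤ (n.choose m : ℝ) * ((c2 : ℝ) * S) := by
          exact mul_le_mul_of_nonneg_left hmain hN2pos.le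
      _ = ((n.choose m : ℝ) * (c2 : ℝ)) * S := by ring
      _ = (c1 : ℝ) * ((k : ℝ) * (n.choose (k * m) : ℝ) * S) := by
          have : ((n.choose m * c2 : ℕ) : ℝ) = ((n.choose (k * m) * (k * c1) : ℕ) : ℝ) := by
            rw [← hid1, hid2]
          push_cast at this
          linear_combination S * this
  rw [div_mul_eq_mul_div, div_mul_eq_mul_div, mul_div_assoc', one_mul, one_mul,
    div_le_div_iff₀ hN1pos hN2pos]
  nlinarith [hfinal]
end

section
/- Assume the event {sup_{t∈T} Σ_i t_i δ'_i ≥ 221·δ'(T)} is Cp-small, where δ'_i are i.i.d. Bernoulli(Cp) obtained by writing δ_i = δ'_i δ''_i with δ''_i i.i.d. Bernoulli(1/C) independent of (δ'_j), and δ'(T) = E sup_{t∈T} Σ_i t_i δ'_i. Then δ'(T) ≤ C·δ(T) (by Jensen applied to E δ''_i = 1/C), and consequently the family {I ⊆ [n] : sup_{t∈T} Σ_{i∈I} t_i ≥ 221·C·δ(T)} is Cp-small. -/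
open Finset

/-- A family `F` of subsets of `[n]` is `p`-small if there is a finite family `G`
with `F ⊆ ⋃_{S ∈ G} ⟨S⟩` (up-sets) and `∑_{S ∈ G} p^|S| ≤ 1/2`. -/
def PSmall {n : ℕ} (p : ℝ) (F : Set (Finset (Fin n))) : Prop :=
  ∃ G : Finset (Finset (Fin n)),
    (∀ I ∈ F, ∃ S ∈ G, S ⊆ I) ∧ ∑ S ∈ G, p ^ S.card ≤ 1 / 2

/-- Expectation over independent Bernoulli(p) selectors `(δ_i)_{i < n}`. -/
noncomputable def selExp (n : ℕ) (p : ℝ) (f : Finset (Fin n) → ℝ) : ℝ :=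
  ∑ K ∈ (Finset.univ : Finset (Fin n)).powerset,
    p ^ K.card * (1 - p) ^ (n - K.card) * f K

section Aux

variable {ι : Type*} [DecidableEq ι]

/-- Bernoulli(r) expectation over subsets of `s`. -/
noncomputable def wSum (s : Finset ι) (r : ℝ) (f : Finset ι → ℝ) : ℝ :=
  ∑ K ∈ s.powerset, r ^ K.card * (1 - r) ^ (s.card - K.card) * f K

lemma wSum_empty (r : ℝ) (f : Finset ι → ℝ) : wSum (∅ : Finset ι) r f = f ∅ := by
  simp [wSum]

lemma wSum_congr {s : Finset ι} {r : ℝ} {f g : Finset ι → ℝ}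
    (h : ∀ K ⊆ s, f K = g K) : wSum s r f = wSum s r g := by
  unfold wSum
  refine Finset.sum_congr rfl fun K hK => ?_
  rw [h K (Finset.mem_powerset.mp hK)]

lemma wSum_insert {i : ι} {s : Finset ι} (hi : i ∉ s) (r : ℝ) (f : Finset ι → ℝ) :
    wSum (insert i s) r f
      = (1 - r) * wSum s r f + r * wSum s r (fun K => f (insert i K)) := by
  unfold wSum
  rw [Finset.sum_powerset_insert hi, Finset.card_insert_of_notMem hi,
    Finset.mul_sum, Finset.mul_sum]
  congr 1
  · refine Finset.sum_congr rfl fun K hK => ?_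
    have hKs : K ⊆ s := Finset.mem_powerset.mp hK
    have h1 : s.card + 1 - K.card = (s.card - K.card) + 1 := by
      have := Finset.card_le_card hKs; omega
    rw [h1]; ring
  · refine Finset.sum_congr rfl fun K hK => ?_
    have hKs : K ⊆ s := Finset.mem_powerset.mp hK
    have hiK : i ∉ K := fun h => hi (hKs h)
    rw [Finset.card_insert_of_notMem hiK]
    have h1 : s.card + 1 - (K.card + 1) = s.card - K.card := by omega
    rw [h1]; ring

lemma wSum_lincomb {s : Finset ι} (r c d : ℝ) (f g : Finset ι → ℝ) :
    wSum s r (fun K => c * f K + d * g K) = c * wSum s r f + d * wSum s r g := by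
  unfold wSum
  rw [Finset.mul_sum, Finset.mul_sum, ← Finset.sum_add_distrib]
  refine Finset.sum_congr rfl fun K _ => ?_
  ring

lemma wSum_smul {s : Finset ι} (r c : ℝ) (f : Finset ι → ℝ) :
    wSum s r (fun K => c * f K) = c * wSum s r f := by
  have := wSum_lincomb (s := s) r c 0 f f
  simpa using this

lemma wSum_const {s : Finset ι} (r c : ℝ) : wSum s r (fun _ => c) = c := by
  induction s using Finset.induction_on with
  | empty => simp [wSum]
  | @insert i s hi ih => rw [wSum_insert hi]; rw [ih]; ring

lemma wSum_const_add {s : Finset ι} (r c : ℝ) (f : Finset ι → ℝ) :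
    wSum s r (fun K => c + f K) = c + wSum s r f := by
  have h := wSum_lincomb (s := s) r c 1 (fun _ => (1:ℝ)) f
  simp only [mul_one, one_mul] at h
  rw [h, wSum_const]; ring

lemma wSum_mono {s : Finset ι} {r : ℝ} (hr0 : 0 ≤ r) (hr1 : r ≤ 1)
    {f g : Finset ι → ℝ} (h : ∀ K ⊆ s, f K ≤ g K) : wSum s r f ≤ wSum s r g := by
  unfold wSum
  refine Finset.sum_le_sum fun K hK => ?_
  have hw : 0 ≤ r ^ K.card * (1 - r) ^ (s.card - K.card) := by
    have : (0:ℝ) ≤ 1 - r := by linarith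
    positivity
  exact mul_le_mul_of_nonneg_left (h K (Finset.mem_powerset.mp hK)) hw

lemma wSum_conv {s : Finset ι} (a b : ℝ) :
    ∀ f : Finset ι → ℝ,
      wSum s a (fun K' => wSum s b (fun K'' => f (K' ∩ K''))) = wSum s (a * b) f := by
  induction s using Finset.induction_on with
  | empty => intro f; simp [wSum]
  | @insert i s hi ih =>
    intro f
    rw [wSum_insert hi, wSum_insert hi (a * b)]
    have outer1 :
        wSum s a (fun K' => wSum (insert i s) b fun K'' => f (K' ∩ K''))
          = wSum s (a * b) f := by
      rw [wSum_congr (g := fun K' => wSum s b fun K'' => f (K' ∩ K''))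
        (fun K' hK' => by
          have hiK' : i ∉ K' := fun h => hi (hK' h)
          rw [wSum_insert hi]
          have he : (fun K'' => f (K' ∩ insert i K'')) = fun K'' => f (K' ∩ K'') := by
            funext K''; rw [Finset.inter_insert_of_notMem hiK']
          rw [he]; ring)]
      exact ih f
    have outer2 :
        wSum s a (fun K₀ => wSum (insert i s) b fun K'' => f (insert i K₀ ∩ K''))
          = (1 - b) * wSum s (a * b) f
            + b * wSum s (a * b) (fun K => f (insert i K)) := by
      rw [wSum_congr
        (g := fun K₀ => (1 - b) * wSum s b (fun K'' => f (K₀ ∩ K''))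
          + b * wSum s b (fun K'' => f (insert i (K₀ ∩ K''))))
        (fun K₀ hK₀ => by
          rw [wSum_insert hi]
          congr 1
          · congr 1
            exact wSum_congr fun K'' hK'' => by
              rw [Finset.insert_inter_of_notMem (fun h => hi (hK'' h))]
          · congr 1
            exact wSum_congr fun K'' hK'' => by
              rw [Finset.insert_inter_of_mem (Finset.mem_insert_self i K''),
                Finset.inter_insert_of_notMem (fun h => hi (hK₀ h))])]
      rw [wSum_lincomb, ih f, ih (fun K => f (insert i K))]
    rw [outer1, outer2]
    ring

lemma wSum_inter_sum {s : Finset ι} (r : ℝ) (t : ι → ℝ) :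
    ∀ A : Finset ι, wSum s r (fun K => ∑ j ∈ A ∩ K, t j) = r * ∑ j ∈ A ∩ s, t j := by
  induction s using Finset.induction_on with
  | empty => intro A; simp [wSum]
  | @insert i s hi ih =>
    intro A
    rw [wSum_insert hi, ih A]
    by_cases hiA : i ∈ A
    · have h2 : wSum s r (fun K => ∑ j ∈ A ∩ insert i K, t j)
          = t i + r * ∑ j ∈ A ∩ s, t j := by
        rw [wSum_congr (g := fun K => t i + ∑ j ∈ A ∩ K, t j)
          (fun K hK => by
            have hiAK : i ∉ A ∩ K := fun h => hi (hK (Finset.mem_inter.mp h).2)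
            rw [Finset.inter_insert_of_mem hiA, Finset.sum_insert hiAK])]
        rw [wSum_const_add, ih A]
      rw [h2, Finset.inter_insert_of_mem hiA,
        Finset.sum_insert (fun h => hi (Finset.mem_inter.mp h).2)]
      ring
    · have h2 : wSum s r (fun K => ∑ j ∈ A ∩ insert i K, t j)
          = r * ∑ j ∈ A ∩ s, t j := by
        rw [wSum_congr (g := fun K => ∑ j ∈ A ∩ K, t j)
          (fun K hK => by rw [Finset.inter_insert_of_notMem hiA])]
        exact ih A
      rw [h2, Finset.inter_insert_of_notMem hiA]
      ring

end Aux

lemma selExp_eq_wSum (n : ℕ) (r : ℝ) (f : Finset (Fin n) → ℝ) :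
    selExp n r f = wSum (Finset.univ : Finset (Fin n)) r f := by
  unfold selExp wSum
  refine Finset.sum_congr rfl fun K _ => ?_
  rw [Finset.card_univ, Fintype.card_fin]

theorem stmt18 (n : ℕ) (T : Finset (Fin n → ℝ)) (hT : T.Nonempty)
    (hpos : ∀ t ∈ T, ∀ i, 0 ≤ t i)
    (p C : ℝ) (hp0 : 0 < p) (hC : 1 < C) (hCp : C * p < 1)
    (δT δT' : ℝ)
    (hδ : δT = selExp n p (fun K => T.sup' hT fun t => ∑ i ∈ K, t i))
    (hδ' : δT' = selExp n (C * p) (fun K => T.sup' hT fun t => ∑ i ∈ K, t i))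
    (hsmall : PSmall (C * p)
      {I : Finset (Fin n) | 221 * δT' ≤ T.sup' hT fun t => ∑ i ∈ I, t i}) :
    δT' ≤ C * δT ∧
      PSmall (C * p)
        {I : Finset (Fin n) | 221 * C * δT ≤ T.sup' hT fun t => ∑ i ∈ I, t i} := by
  classical
  set f : Finset (Fin n) → ℝ := fun K => T.sup' hT fun t => ∑ i ∈ K, t i with hfdef
  have hC0 : (0:ℝ) < C := lt_trans one_pos hC
  have hq0 : (0:ℝ) ≤ 1 / C := by positivity
  have hq1 : 1 / C ≤ 1 := by rw [div_le_one hC0]; linarith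
  have hCp0 : (0:ℝ) ≤ C * p := by positivity
  have hCp1 : C * p ≤ 1 := le_of_lt hCp
  have key : δT' ≤ C * δT := by
    rw [hδ, hδ', selExp_eq_wSum, selExp_eq_wSum]
    have hpt : ∀ K ⊆ (Finset.univ : Finset (Fin n)),
        f K ≤ C * wSum Finset.univ (1 / C) (fun K'' => f (K ∩ K'')) := by
      intro K _
      obtain ⟨ts, hts, htsup⟩ := T.exists_mem_eq_sup' hT (fun t => ∑ i ∈ K, t i)
      have hlow : wSum (Finset.univ : Finset (Fin n)) (1 / C)
            (fun K'' => ∑ j ∈ K ∩ K'', ts j)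
          ≤ wSum Finset.univ (1 / C) (fun K'' => f (K ∩ K'')) :=
        wSum_mono hq0 hq1 (fun K'' _ => Finset.le_sup' _ hts)
      have hlin := wSum_inter_sum (s := (Finset.univ : Finset (Fin n))) (1 / C) ts K
      rw [Finset.inter_univ] at hlin
      rw [hlin] at hlow
      have : f K = ∑ i ∈ K, ts i := htsup
      rw [this]
      calc (∑ i ∈ K, ts i) = C * ((1 / C) * ∑ j ∈ K, ts j) := by field_simp
        _ ≤ C * wSum Finset.univ (1 / C) (fun K'' => f (K ∩ K'')) :=
          mul_le_mul_of_nonneg_left hlow (le_of_lt hC0)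
    calc wSum (Finset.univ : Finset (Fin n)) (C * p) f
        ≤ wSum Finset.univ (C * p)
            (fun K => C * wSum Finset.univ (1 / C) (fun K'' => f (K ∩ K''))) :=
          wSum_mono hCp0 hCp1 hpt
      _ = C * wSum Finset.univ (C * p)
            (fun K => wSum Finset.univ (1 / C) (fun K'' => f (K ∩ K''))) :=
          wSum_smul _ _ _
      _ = C * wSum Finset.univ ((C * p) * (1 / C)) f := by rw [wSum_conv]
      _ = C * wSum Finset.univ p f := by
          rw [show (C * p) * (1 / C) = p by field_simp]
  refine ⟨key, ?_⟩
  obtain ⟨G, hG1, hG2⟩ := hsmall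
  refine ⟨G, fun I hI => hG1 I ?_, hG2⟩
  simp only [Set.mem_setOf_eq] at hI ⊢
  have h221 : 221 * δT' ≤ 221 * (C * δT) :=
    mul_le_mul_of_nonneg_left key (by norm_num)
  calc (221:ℝ) * δT' ≤ 221 * (C * δT) := h221
    _ = 221 * C * δT := by ring
    _ ≤ T.sup' hT fun t => ∑ i ∈ I, t i := hI
end
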